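/- Let g₀ = so(4,ℂ) ⊕ so(4,ℂ) act on ℂ^{4×4} by (E₁, E₂)·A = E₁A + AE₂ᵀ. An element A ∈ ℂ^{4×4} satisfies tr((E₁A + AE₂ᵀ)·A†) = 0 for all E₁, E₂ ∈ so(4,ℂ) if and only if [M_A, M_A†] = 0, where M_A = [[0, A], [-Aᵀ, 0]]. -/

import Mathlib

open Matrix

lemma trace_std_mul (i j : Fin 4) (B : Matrix (Fin 4) (Fin 4) ℂ) :
    ((single i j (1:ℂ)) * B).trace = B j i := by
  simp [trace, diag, mul_apply, single, ite_and]

lemma std_transpose (i j : Fin 4) :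
    (single i j (1:ℂ))ᵀ = single j i 1 := by
  ext a b
  simp [single, and_comm]

lemma tct (A : Matrix (Fin 4) (Fin 4) ℂ) : (Aᵀ)ᴴ = (Aᴴ)ᵀ := by
  ext a b
  simp [conjTranspose_apply]

lemma key (B : Matrix (Fin 4) (Fin 4) ℂ) :
    (∀ E : Matrix (Fin 4) (Fin 4) ℂ, Eᵀ = -E → (E * B).trace = 0) ↔ Bᵀ = B := by
  constructor
  · intro h
    ext i j
    have hE : (single j i (1:ℂ) - single i j 1)ᵀ
        = -(single j i (1:ℂ) - single i j 1) := by
      rw [transpose_sub, std_transpose, std_transpose, neg_sub]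
    have := h _ hE
    rw [sub_mul, trace_sub, trace_std_mul, trace_std_mul, sub_eq_zero] at this
    simpa using this.symm
  · intro hB E hE
    have h1 : (E * B).trace = -(E * B).trace := by
      conv_lhs => rw [← trace_transpose, transpose_mul, hB, hE]
      rw [Matrix.mul_neg, trace_neg, trace_mul_comm]
    have h2 : (2:ℂ) * (E * B).trace = 0 := by linear_combination h1
    simpa using h2

/-- `tr((E₁A + AE₂ᵀ)A†) = 0` for all `E₁, E₂ ∈ so(4,ℂ)` iff `[M_A, M_A†] = 0`,
where `M_A = [[0,A],[-Aᵀ,0]]`. -/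
theorem stmt_6 (A : Matrix (Fin 4) (Fin 4) ℂ) :
    (∀ E1 E2 : Matrix (Fin 4) (Fin 4) ℂ, E1ᵀ = -E1 → E2ᵀ = -E2 →
      ((E1 * A + A * E2ᵀ) * Aᴴ).trace = 0) ↔
    Matrix.fromBlocks (0 : Matrix (Fin 4) (Fin 4) ℂ) A (-Aᵀ) 0 *
        (Matrix.fromBlocks (0 : Matrix (Fin 4) (Fin 4) ℂ) A (-Aᵀ) 0)ᴴ =
      (Matrix.fromBlocks (0 : Matrix (Fin 4) (Fin 4) ℂ) A (-Aᵀ) 0)ᴴ *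
        Matrix.fromBlocks (0 : Matrix (Fin 4) (Fin 4) ℂ) A (-Aᵀ) 0 := by
  rw [fromBlocks_conjTranspose, fromBlocks_multiply, fromBlocks_multiply]
  simp only [Matrix.mul_zero, Matrix.zero_mul, add_zero, zero_add,
    conjTranspose_zero, conjTranspose_neg, Matrix.neg_mul, Matrix.mul_neg, neg_neg]
  rw [fromBlocks_inj]
  have e1 : (Aᵀ)ᴴ * Aᵀ = (A * Aᴴ)ᵀ := by
    rw [transpose_mul, tct]
  have e2 : Aᵀ * (Aᵀ)ᴴ = (Aᴴ * A)ᵀ := by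
    rw [transpose_mul, tct]
  constructor
  · intro h
    have hs1 : (A * Aᴴ)ᵀ = A * Aᴴ := by
      rw [← key]
      intro E hE
      have := h E 0 hE (by simp)
      simpa [Matrix.mul_assoc] using this
    have hs2 : (Aᴴ * A)ᵀ = Aᴴ * A := by
      rw [← key]
      intro E hE
      have hE' : (Eᵀ)ᵀ = -(Eᵀ) := by rw [transpose_transpose, hE, neg_neg]
      have := h 0 Eᵀ (by simp) hE'
      rw [Matrix.zero_mul, zero_add, transpose_transpose, Matrix.mul_assoc,
        trace_mul_comm] at this
      simpa [Matrix.mul_assoc] using this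
    exact ⟨by rw [e1, hs1], by simp, by simp, by rw [e2, hs2]⟩
  · rintro ⟨h1, -, -, h2⟩
    rw [e1] at h1; rw [e2] at h2
    intro E1 E2 hE1 hE2
    rw [add_mul, trace_add]
    have t1 : (E1 * A * Aᴴ).trace = 0 := by
      rw [Matrix.mul_assoc]
      exact (key (A * Aᴴ)).mpr h1.symm E1 hE1
    have t2 : (A * E2ᵀ * Aᴴ).trace = 0 := by
      rw [trace_mul_cycle, trace_mul_comm]
      exact (key (Aᴴ * A)).mpr h2 E2ᵀ (by rw [transpose_transpose, hE2, neg_neg])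
    rw [t1, t2, add_zero]
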